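/- Let κ be an infinite cardinal and let T = {T_m : m < κ} be an indexed family of forests, each having no isolated vertices and exactly κ connected components, each component of cardinality at most κ. Then the κ-regular tree admits a T-factorization: a family {Y_m : m < κ} of pairwise edge-disjoint spanning subgraphs of the κ-regular tree such that Y_m is isomorphic to T_m for every m < κ and the union of their edge sets is the entire edge set of the κ-regular tree. -/

import Mathlib

open Cardinal

universe u

/-- `G` is `κ`-regular: every vertex has degree (neighbourhood cardinality) exactly `κ`. -/
def SimpleGraph.CardRegular {V : Type u} (G : SimpleGraph V) (κ : Cardinal.{u}) : Prop :=
  ∀ v : V, #(G.neighborSet v) = κ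

/-- `G` has no isolated vertices. -/
def SimpleGraph.NoIsolatedVerts {V : Type u} (G : SimpleGraph V) : Prop :=
  ∀ v : V, ∃ w : V, G.Adj v w

/-- A factorization of `G`: a family of spanning subgraphs, pairwise edge-disjoint,
whose edge sets cover `E(G)`. -/
def SimpleGraph.IsFactorization {V : Type u} {ι : Type u} (G : SimpleGraph V)
    (F : ι → SimpleGraph V) : Prop :=
  (∀ i, F i ≤ G) ∧ (Pairwise fun i j => Disjoint (F i).edgeSet (F j).edgeSet) ∧
    (⋃ i, (F i).edgeSet) = G.edgeSet

/-- In the forest `F` rooted at `v₀`, `u` is a child of `w`. -/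
def SimpleGraph.IsChild {V : Type u} (F : SimpleGraph V) (v₀ u w : V) : Prop :=
  F.Adj w u ∧ F.Reachable v₀ u ∧ F.dist v₀ u = F.dist v₀ w + 1

/-- The graph with edges `v_j v_i` for `v_i ∈ C j`, `j < i`. -/
def childGraph {V I : Type u} [LT I] (v : I ≃ V) (C : I → Set V) : SimpleGraph V :=
  SimpleGraph.fromEdgeSet {e | ∃ i j : I, j < i ∧ (v i : V) ∈ C j ∧ e = s(v j, v i)}

/-- Disjoint union of `ι`-many copies of `T`. -/
def copiesGraph (ι : Type u) {W : Type u} (T : SimpleGraph W) : SimpleGraph (ι × W) where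
  Adj p q := p.1 = q.1 ∧ T.Adj p.2 q.2
  symm := ⟨by rintro p q ⟨h1, h2⟩; exact ⟨h1.symm, h2.symm⟩⟩
  loopless := ⟨by rintro p ⟨-, h⟩; exact T.loopless.irrefl _ h⟩



namespace SimpleGraph

variable {Wt : Type u} {F : SimpleGraph Wt}

/-- A forest together with a choice of root in each component (as an idempotent
root function constant on components). -/
structure RootedForest (F : SimpleGraph Wt) : Type u where
  rt : Wt → Wt
  acyclic : F.IsAcyclic
  reach : ∀ v, F.Reachable (rt v) v
  const : ∀ u v, F.Reachable u v → rt u = rt v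

namespace RootedForest

variable (R : RootedForest F)

lemma _root_.SimpleGraph.IsAcyclic.length_eq_dist (hac : F.IsAcyclic) {u v : Wt} (p : F.Walk u v) (hp : p.IsPath) :
    p.length = F.dist u v := by
  obtain ⟨q, hq, hql⟩ := (Reachable.exists_path_of_dist ⟨p⟩ : _)
  have : p = q := by
    have := SimpleGraph.IsAcyclic.path_unique hac ⟨p, hp⟩ ⟨q, hq⟩
    simpa using congrArg Subtype.val this
  rw [this, hql]

lemma _root_.SimpleGraph.IsAcyclic.path_eq (hac : F.IsAcyclic) {u v : Wt} (p q : F.Walk u v) (hp : p.IsPath) (hq : q.IsPath) : p = q := by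
  simpa using congrArg Subtype.val (SimpleGraph.IsAcyclic.path_unique hac ⟨p, hp⟩ ⟨q, hq⟩)

noncomputable def pathTo (v : Wt) : F.Walk (R.rt v) v :=
  (Reachable.exists_path_of_dist (R.reach v)).choose

lemma pathTo_isPath (v : Wt) : (R.pathTo v).IsPath :=
  (Reachable.exists_path_of_dist (R.reach v)).choose_spec.1

noncomputable def depth (v : Wt) : ℕ := F.dist (R.rt v) v

lemma pathTo_length (v : Wt) : (R.pathTo v).length = R.depth v :=
  (Reachable.exists_path_of_dist (R.reach v)).choose_spec.2

lemma rt_idem (v : Wt) : R.rt (R.rt v) = R.rt v :=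
  R.const _ _ (R.reach v)

lemma rt_adj {u v : Wt} (h : F.Adj u v) : R.rt u = R.rt v :=
  R.const _ _ h.reachable

lemma depth_rt (v : Wt) : R.depth (R.rt v) = 0 := by
  unfold depth
  rw [R.rt_idem, dist_self]

lemma depth_eq_zero_iff {v : Wt} : R.depth v = 0 ↔ v = R.rt v := by
  constructor
  · intro h
    rcases (dist_eq_zero_iff_eq_or_not_reachable.mp h) with h | h
    · exact h.symm
    · exact absurd (R.reach v) h
  · intro h
    rw [h]; exact R.depth_rt v

variable [DecidableEq Wt]

lemma depth_of_mem_support {v x : Wt} (hx : x ∈ (R.pathTo v).support) :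
    R.depth x ≤ R.depth v := by
  have hreach : F.Reachable (R.rt v) x := ⟨(R.pathTo v).takeUntil x hx⟩
  have hrt : R.rt x = R.rt v := by
    have := R.const _ _ hreach
    rw [← this, R.rt_idem]
  calc R.depth x = F.dist (R.rt v) x := by rw [depth, hrt]
    _ ≤ ((R.pathTo v).takeUntil x hx).length := dist_le _
    _ ≤ (R.pathTo v).length := Walk.length_takeUntil_le _ _
    _ = R.depth v := R.pathTo_length v

noncomputable def parent (v : Wt) : Wt := (R.pathTo v).getVert (R.depth v - 1)

lemma key {u v : Wt} (h : F.Adj u v) (hu : u ∈ (R.pathTo v).support) :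
    R.depth v = R.depth u + 1 ∧ u = R.parent v := by
  have hq : ((R.pathTo v).takeUntil u hu).IsPath := (R.pathTo_isPath v).takeUntil hu
  have hv : v ∉ ((R.pathTo v).takeUntil u hu).support := by
    intro hv
    have h2 : v ∈ ((R.pathTo v).dropUntil u hu).support.tail :=
      Walk.end_mem_tail_support_of_ne h.ne _
    have hnd := (R.pathTo_isPath v).support_nodup
    rw [← Walk.take_spec (R.pathTo v) hu, Walk.support_append] at hnd
    exact (List.disjoint_of_nodup_append hnd) hv h2
  have hcat : (((R.pathTo v).takeUntil u hu).concat h).IsPath := by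
    rw [Walk.isPath_def, Walk.support_concat]
    refine List.Nodup.append hq.support_nodup (by simp) (by simpa using hv)
  have hpe : R.pathTo v = ((R.pathTo v).takeUntil u hu).concat h :=
    R.acyclic.path_eq _ _ (R.pathTo_isPath v) hcat
  have hrt : R.rt u = R.rt v := R.rt_adj h
  have hdu : R.depth u = ((R.pathTo v).takeUntil u hu).length := by
    have := R.acyclic.length_eq_dist ((R.pathTo v).takeUntil u hu) hq
    rw [depth, hrt, ← this]
  have hdv : R.depth v = ((R.pathTo v).takeUntil u hu).length + 1 := by
    conv_lhs => rw [← R.pathTo_length v, hpe]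
    rw [Walk.length_concat]
  refine ⟨by omega, ?_⟩
  have hgv := congrArg
    (fun (w : F.Walk (R.rt v) v) => w.getVert (((R.pathTo v).takeUntil u hu).length)) hpe
  simp only [Walk.concat_eq_append, Walk.getVert_append, lt_irrefl, if_false,
    Nat.sub_self] at hgv
  rw [parent, hdv]
  simpa only [Nat.add_sub_cancel, Walk.getVert_zero, eq_comm] using hgv

lemma adj_cases {u v : Wt} (h : F.Adj u v) :
    (R.depth v = R.depth u + 1 ∧ u = R.parent v) ∨
      (R.depth u = R.depth v + 1 ∧ v = R.parent u) := by
  by_cases hu : u ∈ (R.pathTo v).support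
  · exact Or.inl (R.key h hu)
  · right
    have hrt : R.rt u = R.rt v := R.rt_adj h
    have hcat : (((R.pathTo v).concat h.symm).copy hrt.symm rfl).IsPath := by
      rw [Walk.isPath_copy, Walk.isPath_def, Walk.support_concat]
      exact List.Nodup.append (R.pathTo_isPath v).support_nodup (by simp) (by simpa using hu)
    have hpe : R.pathTo u = ((R.pathTo v).concat h.symm).copy hrt.symm rfl :=
      R.acyclic.path_eq _ _ (R.pathTo_isPath u) hcat
    have hv : v ∈ (R.pathTo u).support := by
      rw [hpe, Walk.support_copy, Walk.support_concat]
      simp [Walk.end_mem_support]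
    exact R.key h.symm hv

lemma parent_mem_support {v : Wt} : R.parent v ∈ (R.pathTo v).support := by
  rw [Walk.mem_support_iff_exists_getVert]
  exact ⟨R.depth v - 1, rfl, by rw [R.pathTo_length]; omega⟩

lemma parent_adj {v : Wt} (h : R.depth v ≠ 0) : F.Adj (R.parent v) v := by
  have h1 : R.depth v - 1 < (R.pathTo v).length := by rw [R.pathTo_length]; omega
  have := (R.pathTo v).adj_getVert_succ h1
  have h2 : R.depth v - 1 + 1 = (R.pathTo v).length := by rw [R.pathTo_length]; omega
  rw [h2, Walk.getVert_length] at this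
  exact this

lemma depth_parent {v : Wt} (h : R.depth v ≠ 0) :
    R.depth v = R.depth (R.parent v) + 1 := by
  rcases R.adj_cases (R.parent_adj h) with ⟨h1, _⟩ | ⟨h1, _⟩
  · exact h1
  · have := R.depth_of_mem_support (R.parent_mem_support (v := v))
    omega

/-- Characterization of the child relation. -/
lemma child_iff {u v : Wt} :
    (F.Adj v u ∧ R.depth u = R.depth v + 1) ↔ (R.depth u ≠ 0 ∧ R.parent u = v) := by
  constructor
  · rintro ⟨hadj, hd⟩
    rcases R.adj_cases hadj with ⟨h1, h2⟩ | ⟨h1, h2⟩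
    · exact ⟨by omega, h2.symm⟩
    · omega
  · rintro ⟨h0, rfl⟩
    exact ⟨R.parent_adj h0, R.depth_parent h0⟩

/-- The set of children of a vertex. -/
def children (v : Wt) : Set Wt := {u | F.Adj v u ∧ R.depth u = R.depth v + 1}

lemma mem_children_iff {u v : Wt} :
    u ∈ R.children v ↔ (R.depth u ≠ 0 ∧ R.parent u = v) := R.child_iff

lemma neighborSet_eq_of_root {v : Wt} (h : R.depth v = 0) :
    F.neighborSet v = R.children v := by
  ext u
  simp only [mem_neighborSet, children, Set.mem_setOf_eq]
  constructor
  · intro hadj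
    refine ⟨hadj, ?_⟩
    rcases R.adj_cases hadj with ⟨h1, _⟩ | ⟨h1, _⟩
    · exact h1
    · omega
  · exact And.left

lemma neighborSet_eq_of_ne_root {v : Wt} (h : R.depth v ≠ 0) :
    F.neighborSet v = insert (R.parent v) (R.children v) := by
  ext u
  simp only [mem_neighborSet, Set.mem_insert_iff, children, Set.mem_setOf_eq]
  constructor
  · intro hadj
    rcases R.adj_cases hadj with ⟨h1, h2⟩ | ⟨h1, h2⟩
    · exact Or.inr ⟨hadj, h1⟩
    · exact Or.inl h2
  · rintro (rfl | ⟨hadj, _⟩)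
    · exact (R.parent_adj h).symm
    · exact hadj

lemma parent_not_mem_children {v : Wt} : R.parent v ∉ R.children v := by
  intro hc
  rcases hc with ⟨_, hd⟩
  have := R.depth_of_mem_support (R.parent_mem_support (v := v))
  omega

lemma children_subset_supp {v : Wt} :
    R.children v ⊆ (F.connectedComponentMk v).supp := by
  intro u hu
  exact (ConnectedComponent.sound hu.1.reachable).symm

end RootedForest

end SimpleGraph

section Enum

variable {V K : Type u}

theorem exists_enum (pa : V → Option V) (lv : V → ℕ) (r : V)
    (ch : ∀ v : V, K ≃ {u : V // pa u = some v})
    (hr : pa r = none) (hlvr : lv r = 0) (h0 : ∀ v, pa v = none → v = r)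
    (hlv : ∀ v u, pa v = some u → lv v = lv u + 1) :
    ∃ f : List K ≃ V, f [] = r ∧ ∀ (a : K) (l : List K), pa (f (a :: l)) = some (f l) := by
  classical
  let f0 : List K → V := fun l => List.rec r (fun a _ ih => ((ch ih) a).val) l
  have hnil : f0 [] = r := rfl
  have hcons : ∀ (a : K) (l : List K), f0 (a :: l) = ((ch (f0 l)) a).val := fun _ _ => rfl
  have hpa : ∀ (a : K) (l : List K), pa (f0 (a :: l)) = some (f0 l) :=
    fun a l => ((ch (f0 l)) a).prop
  have hinj : Function.Injective f0 := by
    intro l1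
    induction l1 with
    | nil =>
      intro l2 he
      cases l2 with
      | nil => rfl
      | cons b t =>
        exfalso
        have := hpa b t
        rw [← he, hnil, hr] at this
        exact nomatch this
    | cons a t ih =>
      intro l2 he
      cases l2 with
      | nil =>
        exfalso
        have := hpa a t
        rw [he, hnil, hr] at this
        exact nomatch this
      | cons b t2 =>
        have h1 := hpa a t
        rw [he, hpa b t2] at h1
        have h2 : f0 t2 = f0 t := Option.some_injective _ h1
        have h3 : t = t2 := ih h2.symm
        subst h3
        have h4 : ((ch (f0 t)) a : V) = ((ch (f0 t)) b : V) := by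
          rw [← hcons, ← hcons, he]
        have h5 : ((ch (f0 t)) a) = ((ch (f0 t)) b) := Subtype.ext h4
        rw [(ch (f0 t)).injective h5]
  have hsurj : Function.Surjective f0 := by
    have key : ∀ (n : ℕ) (v : V), lv v = n → ∃ l, f0 l = v := by
      intro n
      induction n using Nat.strong_induction_on with
      | _ n ihn =>
        intro v hv
        cases hpv : pa v with
        | none => exact ⟨[], (h0 v hpv).symm⟩
        | some u =>
          have hlt : lv u < n := by
            have := hlv v u hpv
            omega
          obtain ⟨l, hl⟩ := ihn _ hlt u rfl
          refine ⟨((ch (f0 l)).symm ⟨v, by rw [hl]; exact hpv⟩) :: l, ?_⟩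
          rw [hcons, Equiv.apply_symm_apply]
    exact fun v => key (lv v) v rfl
  refine ⟨Equiv.ofBijective f0 ⟨hinj, hsurj⟩, hnil, hpa⟩

end Enum

section Construction

open SimpleGraph

/-- Blocks of component indices reserved for each level. -/
def Blk (K : Type u) : ℕ → Set (Option (ℕ × K))
  | 0 => {none}
  | n + 1 => {x | ∃ k : K, x = some (n, k)}

lemma sigma_card_le {A : Type u} {f : A → Type u} {c : Cardinal.{u}} (hc : ℵ₀ ≤ c)
    (hA : #A ≤ c) (hf : ∀ a, #(f a) ≤ c) : #(Σ a, f a) ≤ c := by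
  rw [Cardinal.mk_sigma]
  calc (Cardinal.sum fun a => #(f a)) ≤ Cardinal.sum fun _ : A => c :=
        Cardinal.sum_le_sum _ _ hf
    _ = #A * c := Cardinal.sum_const' A c
    _ ≤ c * c := mul_le_mul_left hA c
    _ = c := Cardinal.mul_eq_self hc

variable {K : Type u} {W : K → Type u}

structure PSt (T : ∀ m : K, SimpleGraph (W m))
    (R : ∀ m, (T m).RootedForest) (rtc : ∀ m, (T m).ConnectedComponent → W m)
    (ε : ∀ m, (T m).ConnectedComponent ≃ Option (ℕ × K)) (κ : Cardinal.{u}) (n : ℕ) :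
    Type (u + 1) where
  A : Type u
  w : A → ∀ m, W m
  col : A → Option K
  hA : #A ≤ κ
  fr : ∀ m, {a : A // col a ≠ some m} → (T m).ConnectedComponent
  hw : ∀ m (a : A) (h : col a ≠ some m), w a m = rtc m (fr m ⟨a, h⟩)
  hinj : ∀ m, Function.Injective (fr m)
  hran : ∀ m, Set.range (fr m) = (ε m) ⁻¹' (Blk K n)

variable {T : ∀ m : K, SimpleGraph (W m)} {R : ∀ m, (T m).RootedForest}
  {rtc : ∀ m, (T m).ConnectedComponent → W m}
  {ε : ∀ m, (T m).ConnectedComponent ≃ Option (ℕ × K)} {κ : Cardinal.{u}}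

variable (hκ : ℵ₀ ≤ κ) (hK : #K = κ)
  (hrtc0 : ∀ m c, (R m).depth (rtc m c) = 0)
  (hne : ∀ m (v : W m), ((T m).neighborSet v).Nonempty)
  (hchle : ∀ m (v : W m), #((R m).children v) ≤ κ)

noncomputable def step (n : ℕ) (S : PSt T R rtc ε κ n) : PSt T R rtc ε κ (n + 1) :=
  letI : DecidableEq K := Classical.decEq K
  letI A' : Type u := Σ (a : S.A) (m : K), ↥((R m).children (S.w a m))
  have hfresh : ∀ (a : S.A) (m : K), S.col a ≠ some m →
      ((R m).children (S.w a m)).Nonempty := by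
    intro a m h
    classical
    have h2 : (R m).depth (S.w a m) = 0 := by rw [S.hw m a h]; exact hrtc0 _ _
    rw [← (R m).neighborSet_eq_of_root h2]
    exact hne _ _
  haveI hKinf : Infinite K := by
    rw [Cardinal.infinite_iff, hK]; exact hκ
  have hA' : #A' ≤ κ := by
    refine sigma_card_le hκ S.hA (fun a => ?_)
    exact sigma_card_le hκ hK.le (fun m => hchle m _)
  have hScard : ∀ m : K, #{p : A' // p.2.1 ≠ m} = κ := by
    intro m
    refine le_antisymm ((Cardinal.mk_subtype_le _).trans hA') ?_
    have hA0 : Nonempty S.A := by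
      have h0 : ((ε m) ⁻¹' (Blk K n)).Nonempty := by
        cases n with
        | zero => exact ⟨(ε m).symm none, by simp [Blk]⟩
        | succ j =>
          obtain ⟨k⟩ : Nonempty K := inferInstance
          exact ⟨(ε m).symm (some (j, k)), by simp [Blk]⟩
      obtain ⟨c, hc⟩ := h0
      rw [← S.hran m] at hc
      obtain ⟨q, -⟩ := hc
      exact ⟨q.1⟩
    obtain ⟨a₀⟩ := hA0
    classical
    set bad : Set K := {m' | m' = m ∨ S.col a₀ = some m'} with hbaddef
    have hbadfin : bad.Finite := by
      cases hcol : S.col a₀ with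
      | none =>
        refine Set.Finite.subset (Set.finite_singleton m) ?_
        rintro x (rfl | hx)
        · rfl
        · rw [hcol] at hx; exact nomatch hx
      | some m₀ =>
        refine Set.Finite.subset ((Set.finite_singleton m₀).insert m) ?_
        rintro x (rfl | hx)
        · exact Set.mem_insert _ _
        · rw [hcol] at hx
          exact Set.mem_insert_iff.mpr (Or.inr (Option.some_injective _ hx.symm))
    have hcompl : #(↥badᶜ) = κ := by
      rw [Cardinal.mk_compl_of_infinite bad (by rw [hK]; exact hbadfin.lt_aleph0.trans_le hκ)]
      exact hK
    have hinjf : ∃ f : ↥badᶜ → {p : A' // p.2.1 ≠ m}, Function.Injective f := by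
      refine ⟨fun m' => ⟨⟨a₀, m'.1,
        ⟨(hfresh a₀ m'.1 (fun hc => m'.2 (Or.inr hc))).some,
         (hfresh a₀ m'.1 (fun hc => m'.2 (Or.inr hc))).some_mem⟩⟩,
        fun he => m'.2 (Or.inl he)⟩, ?_⟩
      intro x y hxy
      exact Subtype.ext (congrArg (fun (q : {p : A' // p.2.1 ≠ m}) => q.1.2.1) hxy)
    obtain ⟨f, hf⟩ := hinjf
    exact hcompl.symm.trans_le (Cardinal.mk_le_of_injective hf)
  letI σ : ∀ m : K, {p : A' // p.2.1 ≠ m} ≃ K := fun m =>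
    Classical.choice (Cardinal.eq.mp ((hScard m).trans hK.symm))
  { A := A'
    w := fun p m' =>
      if h : p.2.1 = m' then h ▸ (p.2.2.val : W p.2.1)
      else rtc m' ((ε m').symm (some (n, σ m' ⟨p, h⟩)))
    col := fun p => some p.2.1
    hA := hA'
    fr := fun m' q => (ε m').symm (some (n, σ m' ⟨q.1, fun hh => q.2 (congrArg some hh)⟩))
    hw := by
      intro m' a h
      have h' : a.2.1 ≠ m' := fun hh => h (congrArg some hh)
      show dite _ _ _ = _
      rw [dif_neg h']
    hinj := by
      intro m' q q' he
      have h1 := (ε m').symm.injective he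
      simp only [Option.some.injEq, Prod.mk.injEq] at h1
      have h3 := (σ m').injective h1.2
      exact Subtype.ext (congrArg (fun (x : {p : A' // p.2.1 ≠ m'}) => x.1) h3)
    hran := by
      intro m'
      ext c
      constructor
      · rintro ⟨q, rfl⟩
        simp only [Set.mem_preimage, Equiv.apply_symm_apply, Blk]
        exact ⟨_, rfl⟩
      · rintro hc
        obtain ⟨k, hk⟩ : ∃ k : K, ε m' c = some (n, k) := hc
        refine ⟨⟨((σ m').symm k).1,
          fun hh => ((σ m').symm k).2 (Option.some_injective _ hh)⟩, ?_⟩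
        show (ε m').symm (some (n, σ m' ((σ m').symm k))) = c
        rw [Equiv.apply_symm_apply, ← hk, Equiv.symm_apply_apply] }

noncomputable def S0 : PSt T R rtc ε κ 0 where
  A := PUnit
  w := fun _ m => rtc m ((ε m).symm none)
  col := fun _ => none
  hA := by
    rw [Cardinal.mk_punit]
    exact le_trans Cardinal.one_le_aleph0 hκ
  fr := fun m _ => (ε m).symm none
  hw := fun _ _ _ => rfl
  hinj := fun m q q' _ => Subsingleton.elim _ _
  hran := by
    intro m
    ext c
    constructor
    · rintro ⟨q, rfl⟩
      simp [Blk]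
    · intro hc
      have hc2 : c = (ε m).symm none := by
        have h3 : ε m c = none := hc
        rw [← h3, Equiv.symm_apply_apply]
      exact ⟨⟨PUnit.unit, by simp⟩, hc2.symm⟩

noncomputable def Iter : ∀ n : ℕ, PSt T R rtc ε κ n :=
  fun n => Nat.rec (S0 hκ) (fun j S => step hκ hK hrtc0 hne hchle j S) n

structure Setup : Type (u + 1) where
  K : Type u
  κ : Cardinal.{u}
  W : K → Type u
  T : ∀ m, SimpleGraph (W m)
  R : ∀ m, (T m).RootedForest
  rtc : ∀ m, (T m).ConnectedComponent → W m
  ε : ∀ m, (T m).ConnectedComponent ≃ Option (ℕ × K)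
  hκ : ℵ₀ ≤ κ
  hK : #K = κ
  hrt : ∀ m v, (R m).rt v = rtc m ((T m).connectedComponentMk v)
  hsec : ∀ m c, (T m).connectedComponentMk (rtc m c) = c
  hne : ∀ m v, ((T m).neighborSet v).Nonempty
  hchle : ∀ m v, #((R m).children v) ≤ κ

namespace Setup

variable (S : Setup.{u})

lemma rtc0 : ∀ m c, (S.R m).depth (S.rtc m c) = 0 := by
  intro m c
  rw [(S.R m).depth_eq_zero_iff, S.hrt, S.hsec]

noncomputable def It (n : ℕ) : PSt S.T S.R S.rtc S.ε S.κ n :=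
  Iter S.hκ S.hK S.rtc0 S.hne S.hchle n

/-- The vertex set of the `κ`-regular tree we construct. -/
def XV : Type u := Σ n, (S.It n).A

def mk0 : S.XV := ⟨0, PUnit.unit⟩

def paX : S.XV → Option S.XV := fun x =>
  match x with
  | ⟨0, _⟩ => none
  | ⟨n + 1, p⟩ => some ⟨n, p.1⟩

def lvX : S.XV → ℕ := fun x => x.1

noncomputable def colX : S.XV → Option S.K := fun x => (S.It x.1).col x.2

noncomputable def wX (x : S.XV) (m : S.K) : S.W m := (S.It x.1).w x.2 m

lemma colX_succ {n : ℕ} (p : (S.It (n + 1)).A) : S.colX ⟨n + 1, p⟩ = some p.2.1 := rfl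

lemma wX_self {n : ℕ} (p : (S.It (n + 1)).A) : S.wX ⟨n + 1, p⟩ p.2.1 = p.2.2.val := by
  letI : DecidableEq S.K := Classical.decEq S.K
  exact dif_pos rfl

lemma wX_mem_children {n : ℕ} (p : (S.It (n + 1)).A) :
    S.wX ⟨n + 1, p⟩ p.2.1 ∈ (S.R p.2.1).children ((S.It n).w p.1 p.2.1) := by
  rw [S.wX_self]; exact p.2.2.prop

lemma wX_succ_parent {n : ℕ} (p : (S.It (n + 1)).A) :
    (S.R p.2.1).depth (S.wX ⟨n + 1, p⟩ p.2.1) ≠ 0 ∧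
      (S.R p.2.1).parent (S.wX ⟨n + 1, p⟩ p.2.1) = (S.It n).w p.1 p.2.1 := by
  classical
  exact (S.R p.2.1).mem_children_iff.mp (S.wX_mem_children p)

noncomputable def gfr {x : S.XV} {m : S.K} (h : S.colX x ≠ some m) : (S.T m).ConnectedComponent :=
  (S.It x.1).fr m ⟨x.2, h⟩

lemma wX_fresh {x : S.XV} {m : S.K} (h : S.colX x ≠ some m) :
    S.wX x m = S.rtc m (S.gfr h) :=
  (S.It x.1).hw m x.2 h

lemma depth_wX_fresh {x : S.XV} {m : S.K} (h : S.colX x ≠ some m) :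
    (S.R m).depth (S.wX x m) = 0 := by
  rw [S.wX_fresh h]; exact S.rtc0 m _

lemma Blk_eq {K : Type u} {x : Option (ℕ × K)} {n n' : ℕ}
    (hn : x ∈ Blk K n) (hn' : x ∈ Blk K n') : n = n' := by
  cases n with
  | zero =>
    cases n' with
    | zero => rfl
    | succ j =>
      obtain ⟨k, hk⟩ := hn'
      rw [hn] at hk
      exact nomatch hk
  | succ j =>
    cases n' with
    | zero =>
      obtain ⟨k, hk⟩ := hn
      rw [hn'] at hk
      exact nomatch hk
    | succ j' =>
      obtain ⟨k, hk⟩ := hn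
      obtain ⟨k', hk'⟩ := hn'
      rw [hk] at hk'
      simp only [Option.some.injEq, Prod.mk.injEq] at hk'
      rw [hk'.1]

lemma gfr_mem {x : S.XV} {m : S.K} (h : S.colX x ≠ some m) :
    S.ε m (S.gfr h) ∈ Blk S.K x.1 := by
  have : S.gfr h ∈ Set.range ((S.It x.1).fr m) := ⟨⟨x.2, h⟩, rfl⟩
  rw [(S.It x.1).hran m] at this
  exact this

lemma gfr_inj {x x' : S.XV} {m : S.K} (h : S.colX x ≠ some m) (h' : S.colX x' ≠ some m)
    (he : S.gfr h = S.gfr h') : x = x' := by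
  obtain ⟨n, a⟩ := x
  obtain ⟨n', a'⟩ := x'
  have hn : n = n' := by
    refine Blk_eq (S.gfr_mem h) ?_
    rw [he]
    exact S.gfr_mem h'
  subst hn
  have := (S.It n).hinj m he
  have h2 : a = a' := congrArg Subtype.val this
  rw [h2]

lemma gfr_surj (m : S.K) (c : (S.T m).ConnectedComponent) :
    ∃ (x : S.XV) (h : S.colX x ≠ some m), S.gfr h = c := by
  cases hε : S.ε m c with
  | none =>
    have hmem : c ∈ Set.range ((S.It 0).fr m) := by
      rw [(S.It 0).hran m]
      show S.ε m c ∈ Blk S.K 0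
      rw [hε]; rfl
    obtain ⟨q, hq⟩ := hmem
    exact ⟨⟨0, q.1⟩, q.2, hq⟩
  | some nk =>
    have hmem : c ∈ Set.range ((S.It (nk.1 + 1)).fr m) := by
      rw [(S.It (nk.1 + 1)).hran m]
      show S.ε m c ∈ Blk S.K (nk.1 + 1)
      rw [hε]
      exact ⟨nk.2, rfl⟩
    obtain ⟨q, hq⟩ := hmem
    exact ⟨⟨nk.1 + 1, q.1⟩, q.2, hq⟩

lemma colX_zero (a : (S.It 0).A) : S.colX ⟨0, a⟩ = none := rfl

lemma depth_ne_zero_of_col {x : S.XV} {m : S.K} (h : S.colX x = some m) :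
    (S.R m).depth (S.wX x m) ≠ 0 := by
  obtain ⟨n, a⟩ := x
  cases n with
  | zero => exact absurd (S.colX_zero a ▸ h) (by simp)
  | succ n =>
    have hm : a.2.1 = m := Option.some_injective _ ((S.colX_succ a).symm.trans h)
    subst hm
    exact (S.wX_succ_parent a).1

/-- Attach a new child labelled `u` below vertex `y`. -/
noncomputable def attach (m : S.K) (u : S.W m) (y : S.XV)
    (hy : (S.R m).depth u ≠ 0 ∧ S.wX y m = (S.R m).parent u) : S.XV :=
  ⟨y.1 + 1, ⟨y.2, m, ⟨u, by
    classical
    exact (S.R m).mem_children_iff.mpr ⟨hy.1, hy.2.symm⟩⟩⟩⟩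

lemma attach_congr (m : S.K) (u : S.W m) {y z : S.XV} (hyz : y = z)
    (hy : (S.R m).depth u ≠ 0 ∧ S.wX y m = (S.R m).parent u)
    (hz : (S.R m).depth u ≠ 0 ∧ S.wX z m = (S.R m).parent u) :
    S.attach m u y hy = S.attach m u z hz := by subst hyz; rfl

lemma wX_attach (m : S.K) (u : S.W m) (y : S.XV)
    (hy : (S.R m).depth u ≠ 0 ∧ S.wX y m = (S.R m).parent u) :
    S.wX (S.attach m u y hy) m = u :=
  S.wX_self _

noncomputable def psiF (m : S.K) :
    (n : ℕ) → (u : S.W m) → (S.R m).depth u = n → {x : S.XV // S.wX x m = u}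
  | 0, u, h =>
    ⟨(S.gfr_surj m ((S.T m).connectedComponentMk u)).choose, by
      obtain ⟨hcol, hc⟩ := (S.gfr_surj m ((S.T m).connectedComponentMk u)).choose_spec
      rw [S.wX_fresh hcol, hc, ← S.hrt m u]
      exact ((S.R m).depth_eq_zero_iff.mp h).symm⟩
  | n + 1, u, h =>
    let prev := psiF m n ((S.R m).parent u)
      (by
        classical
        have h1 := (S.R m).depth_parent (by omega : (S.R m).depth u ≠ 0)
        omega)
    ⟨S.attach m u prev.1 ⟨by omega, prev.2⟩, S.wX_attach m u prev.1 _⟩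

lemma psiF_eq (m : S.K) :
    ∀ (n : ℕ) (u : S.W m) (h : (S.R m).depth u = n) (x : S.XV),
      S.wX x m = u → (S.psiF m n u h).1 = x := by
  intro n
  induction n with
  | zero =>
    intro u h x hx
    have hcol : S.colX x ≠ some m := by
      intro hc
      exact S.depth_ne_zero_of_col hc (by rw [hx]; exact h)
    have hgx : S.gfr hcol = (S.T m).connectedComponentMk u := by
      have h1 : u = S.rtc m (S.gfr hcol) := by rw [← hx, S.wX_fresh hcol]
      rw [h1, S.hsec]
    obtain ⟨hcol', hc'⟩ := (S.gfr_surj m ((S.T m).connectedComponentMk u)).choose_spec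
    have heq0 : (S.psiF m 0 u h).1
        = (S.gfr_surj m ((S.T m).connectedComponentMk u)).choose := rfl
    rw [heq0]
    exact S.gfr_inj hcol' hcol (hc'.trans hgx.symm)
  | succ n ih =>
    intro u h x hx
    have hd0 : (S.R m).depth u ≠ 0 := by omega
    have hcol : S.colX x = some m := by
      by_contra hc
      exact hd0 (by rw [← hx]; exact S.depth_wX_fresh hc)
    obtain ⟨j, a⟩ := x
    cases j with
    | zero => exact absurd (S.colX_zero a ▸ hcol) (by simp)
    | succ j =>
      obtain ⟨b, m', uu⟩ := a
      have hm : m' = m := Option.some_injective _ ((S.colX_succ ⟨b, m', uu⟩).symm.trans hcol)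
      subst hm
      have huu : uu.val = u := by rw [← S.wX_self ⟨b, m', uu⟩]; exact hx
      have hpar : S.wX ⟨j, b⟩ m' = (S.R m').parent u := by
        have := (S.wX_succ_parent ⟨b, m', uu⟩).2
        rw [hx] at this
        exact this.symm
      have hdp : (S.R m').depth ((S.R m').parent u) = n := by
        classical
        have h1 := (S.R m').depth_parent hd0
        omega
      have prevEq : (S.psiF m' n ((S.R m').parent u) hdp).1 = ⟨j, b⟩ :=
        ih ((S.R m').parent u) hdp ⟨j, b⟩ hpar
      have hstep : (S.psiF m' (n + 1) u h).1 =
          S.attach m' u (S.psiF m' n ((S.R m').parent u) hdp).1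
            ⟨hd0, (S.psiF m' n ((S.R m').parent u) hdp).2⟩ := rfl
      rw [hstep, S.attach_congr m' u prevEq _ ⟨hd0, hpar⟩]
      have hmem : u ∈ (S.R m').children ((S.It j).w b m') := by
        classical
        exact (S.R m').mem_children_iff.mpr ⟨hd0, hpar.symm⟩
      exact congrArg (fun z : ↥((S.R m').children ((S.It j).w b m')) =>
        (⟨j + 1, ⟨b, m', z⟩⟩ : S.XV))
        (show (⟨u, hmem⟩ : ↥((S.R m').children ((S.It j).w b m'))) = uu from
          Subtype.ext huu.symm)

/-- `φ`: the vertex bijection from `XV` to `W m`. -/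
noncomputable def phi (m : S.K) (x : S.XV) : S.W m := S.wX x m

lemma phi_bij (m : S.K) : Function.Bijective (S.phi m) := by
  constructor
  · intro x y hxy
    have h1 := S.psiF_eq m ((S.R m).depth (S.phi m x)) (S.phi m x) rfl x rfl
    have h2 := S.psiF_eq m ((S.R m).depth (S.phi m x)) (S.phi m x) rfl y hxy.symm
    rw [← h1, h2]
  · intro u
    exact ⟨(S.psiF m ((S.R m).depth u) u rfl).1, (S.psiF m ((S.R m).depth u) u rfl).2⟩

def XG : SimpleGraph S.XV := SimpleGraph.fromRel (fun x y => S.paX y = some x)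

def FX (m : S.K) : SimpleGraph S.XV :=
  SimpleGraph.fromRel (fun x y => S.paX y = some x ∧ S.colX y = some m)

lemma paX_lv {x y : S.XV} (h : S.paX y = some x) : y.1 = x.1 + 1 := by
  obtain ⟨n, p⟩ := y
  cases n with
  | zero => exact absurd h (by simp [paX])
  | succ n =>
    have h2 : (⟨n, p.1⟩ : S.XV) = x := Option.some_injective _ h
    rw [← h2]

lemma paX_ne {x y : S.XV} (h : S.paX y = some x) : x ≠ y := by
  intro he
  have := S.paX_lv h
  rw [← he] at this
  omega

lemma FX_adj {m : S.K} {x y : S.XV} : (S.FX m).Adj x y ↔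
    (S.paX y = some x ∧ S.colX y = some m) ∨ (S.paX x = some y ∧ S.colX x = some m) := by
  rw [FX, SimpleGraph.fromRel_adj]
  constructor
  · exact And.right
  · intro h
    refine ⟨?_, h⟩
    rcases h with ⟨h1, -⟩ | ⟨h1, -⟩
    · exact S.paX_ne h1
    · exact (S.paX_ne h1).symm

lemma XG_adj {x y : S.XV} : S.XG.Adj x y ↔
    (S.paX y = some x) ∨ (S.paX x = some y) := by
  rw [XG, SimpleGraph.fromRel_adj]
  constructor
  · exact And.right
  · intro h
    refine ⟨?_, h⟩
    rcases h with h1 | h1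
    · exact S.paX_ne h1
    · exact (S.paX_ne h1).symm

lemma FX_le_XG (m : S.K) : S.FX m ≤ S.XG := by
  intro x y h
  rw [S.XG_adj]
  rcases S.FX_adj.mp h with ⟨h1, -⟩ | ⟨h1, -⟩
  · exact Or.inl h1
  · exact Or.inr h1

lemma colX_of_child {x y : S.XV} (h : S.paX y = some x) :
    ∃ m : S.K, S.colX y = some m := by
  obtain ⟨n, p⟩ := y
  cases n with
  | zero => exact absurd h (by simp [paX])
  | succ n => exact ⟨p.2.1, rfl⟩

/-- The key adjacency transfer: `phi m` maps the `m`-th factor to `T m`. -/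
lemma child_case {m : S.K} {x y : S.XV}
    (hd : (S.R m).depth (S.phi m y) ≠ 0)
    (hp : (S.R m).parent (S.phi m y) = S.phi m x) :
    S.paX y = some x ∧ S.colX y = some m := by
  obtain ⟨n, p⟩ := y
  cases n with
  | zero =>
    exfalso
    apply hd
    exact S.depth_wX_fresh (by rw [S.colX_zero]; simp)
  | succ n =>
    obtain ⟨b, m', uu⟩ := p
    by_cases hm : m' = m
    · subst hm
      have h2 := (S.wX_succ_parent ⟨b, m', uu⟩).2
      have h3 : S.wX ⟨n, b⟩ m' = S.phi m' x := by
        show (S.It n).w b m' = _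
        rw [← h2]
        exact hp.symm ▸ rfl
      have h4 : (⟨n, b⟩ : S.XV) = x := (S.phi_bij m').1 h3
      exact ⟨by rw [← h4]; rfl, rfl⟩
    · exfalso
      apply hd
      apply S.depth_wX_fresh
      show some m' ≠ some m
      simp only [ne_eq, Option.some.injEq]
      exact hm

lemma FX_adj_iff (m : S.K) (x y : S.XV) :
    (S.FX m).Adj x y ↔ (S.T m).Adj (S.phi m x) (S.phi m y) := by
  constructor
  · intro h
    rcases S.FX_adj.mp h with ⟨h1, h2⟩ | ⟨h1, h2⟩
    · -- y is a child of x with colour m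
      obtain ⟨n, p⟩ := y
      cases n with
      | zero => exact absurd h1 (by simp [paX])
      | succ n =>
        obtain ⟨b, m', uu⟩ := p
        have hm : m' = m := by
          have := S.colX_succ ⟨b, m', uu⟩
          rw [this] at h2
          exact Option.some_injective _ h2
        subst hm
        have hx : (⟨n, b⟩ : S.XV) = x := Option.some_injective _ h1
        subst hx
        have hmem := S.wX_mem_children ⟨b, m', uu⟩
        exact hmem.1
    · obtain ⟨n, p⟩ := x
      cases n with
      | zero => exact absurd h1 (by simp [paX])
      | succ n =>
        obtain ⟨b, m', uu⟩ := p
        have hm : m' = m := by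
          have := S.colX_succ ⟨b, m', uu⟩
          rw [this] at h2
          exact Option.some_injective _ h2
        subst hm
        have hy : (⟨n, b⟩ : S.XV) = y := Option.some_injective _ h1
        subst hy
        have hmem := S.wX_mem_children ⟨b, m', uu⟩
        exact hmem.1.symm
  · intro h
    classical
    rcases (S.R m).adj_cases h with ⟨h1, h2⟩ | ⟨h1, h2⟩
    · exact S.FX_adj.mpr (Or.inl (S.child_case (by omega) h2.symm))
    · exact S.FX_adj.mpr (Or.inr (S.child_case (by omega) h2.symm))

noncomputable def phiEquiv (m : S.K) : S.XV ≃ S.W m :=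
  Equiv.ofBijective _ (S.phi_bij m)

noncomputable def FXiso (m : S.K) : S.FX m ≃g S.T m :=
  ⟨S.phiEquiv m, by intro x y; exact (S.FX_adj_iff m x y).symm⟩

lemma fresh_children_nonempty {x : S.XV} {m : S.K} (h : S.colX x ≠ some m) :
    ((S.R m).children (S.wX x m)).Nonempty := by
  classical
  rw [← (S.R m).neighborSet_eq_of_root (S.depth_wX_fresh h)]
  exact S.hne m _

lemma card_childSet (x : S.XV) : #{y : S.XV // S.paX y = some x} = S.κ := by
  classical
  haveI hKinf : Infinite S.K := by rw [Cardinal.infinite_iff, S.hK]; exact S.hκ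
  obtain ⟨n, a⟩ := x
  let Ch := Σ m : S.K, ↥((S.R m).children ((S.It n).w a m))
  let g : Ch → {y : S.XV // S.paX y = some ⟨n, a⟩} := fun d => ⟨⟨n + 1, ⟨a, d.1, d.2⟩⟩, rfl⟩
  have hginj : Function.Injective g := by
    rintro ⟨dm, du⟩ ⟨dm', du'⟩ h
    have h1 : (⟨n + 1, ⟨a, dm, du⟩⟩ : S.XV) = ⟨n + 1, ⟨a, dm', du'⟩⟩ :=
      congrArg Subtype.val h
    cases h1
    rfl
  have hgsurj : Function.Surjective g := by
    rintro ⟨⟨j, q⟩, hy⟩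
    cases j with
    | zero => exact absurd hy (by simp [paX])
    | succ j =>
      have h2 : (⟨j, q.1⟩ : S.XV) = ⟨n, a⟩ := Option.some_injective _ hy
      have hj : j = n := congrArg Sigma.fst h2
      subst hj
      obtain ⟨q1, qm, qu⟩ := q
      simp only [Sigma.mk.inj_iff, heq_eq_eq, true_and] at h2
      cases h2
      exact ⟨⟨qm, qu⟩, Subtype.ext rfl⟩
  have hcongr : #{y : S.XV // S.paX y = some ⟨n, a⟩} = #Ch :=
    (Cardinal.mk_congr (Equiv.ofBijective g ⟨hginj, hgsurj⟩)).symm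
  rw [hcongr]
  refine le_antisymm (sigma_card_le S.hκ S.hK.le (fun m => S.hchle m _)) ?_
  set bad : Set S.K := {m' | S.colX ⟨n, a⟩ = some m'} with hbaddef
  have hbadfin : bad.Finite := by
    apply Set.Subsingleton.finite
    intro m1 h1 m2 h2
    exact Option.some_injective _ (h1.symm.trans h2)
  have hcompl : #(↥badᶜ) = S.κ := by
    rw [Cardinal.mk_compl_of_infinite bad
      (by rw [S.hK]; exact hbadfin.lt_aleph0.trans_le S.hκ)]
    exact S.hK
  have hf : ∃ f : ↥badᶜ → Ch, Function.Injective f := by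
    refine ⟨fun m' => ⟨m'.1,
      ⟨(S.fresh_children_nonempty (x := ⟨n, a⟩) (fun hc => m'.2 hc)).some,
       (S.fresh_children_nonempty (x := ⟨n, a⟩) (fun hc => m'.2 hc)).some_mem⟩⟩, ?_⟩
    intro x y hxy
    exact Subtype.ext (congrArg (fun d : Ch => d.1) hxy)
  obtain ⟨f, hf⟩ := hf
  exact hcompl.symm.trans_le (Cardinal.mk_le_of_injective hf)

noncomputable def chX (x : S.XV) : S.K ≃ {y : S.XV // S.paX y = some x} :=
  Classical.choice (Cardinal.eq.mp (S.hK.trans (S.card_childSet x).symm))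

lemma paX_none_eq (x : S.XV) (h : S.paX x = none) : x = S.mk0 := by
  obtain ⟨n, a⟩ := x
  cases n with
  | zero => cases a; rfl
  | succ n => exact absurd h (by simp [paX])

lemma Xenum : ∃ f : List S.K ≃ S.XV,
    f [] = S.mk0 ∧ ∀ (a : S.K) (l : List S.K), S.paX (f (a :: l)) = some (f l) :=
  exists_enum S.paX S.lvX S.mk0 S.chX rfl rfl S.paX_none_eq (fun x y h => S.paX_lv h)

lemma FX_adj_disjoint {m m' : S.K} {x y : S.XV}
    (h : (S.FX m).Adj x y) (h' : (S.FX m').Adj x y) : m = m' := by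
  rcases S.FX_adj.mp h with ⟨h1, h2⟩ | ⟨h1, h2⟩ <;>
    rcases S.FX_adj.mp h' with ⟨h1', h2'⟩ | ⟨h1', h2'⟩
  · exact Option.some_injective _ (h2.symm.trans h2')
  · have e1 := S.paX_lv h1
    have e2 := S.paX_lv h1'
    omega
  · have e1 := S.paX_lv h1
    have e2 := S.paX_lv h1'
    omega
  · exact Option.some_injective _ (h2.symm.trans h2')

lemma XG_adj_exists {x y : S.XV} (h : S.XG.Adj x y) : ∃ m : S.K, (S.FX m).Adj x y := by
  rcases S.XG_adj.mp h with h1 | h1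
  · obtain ⟨m, hm⟩ := S.colX_of_child h1
    exact ⟨m, S.FX_adj.mpr (Or.inl ⟨h1, hm⟩)⟩
  · obtain ⟨m, hm⟩ := S.colX_of_child h1
    exact ⟨m, S.FX_adj.mpr (Or.inr ⟨h1, hm⟩)⟩

end Setup

end Construction

theorem stmt_4' (κ : Cardinal.{u}) (hκ : ℵ₀ ≤ κ)
    (W : κ.ord.ToType → Type u) (T : ∀ m, SimpleGraph (W m))
    (hac : ∀ m, (T m).IsAcyclic) (hni : ∀ m, (T m).NoIsolatedVerts)
    (hcomp : ∀ m, #((T m).ConnectedComponent) = κ)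
    (hord : ∀ m (c : (T m).ConnectedComponent), #c.supp ≤ κ)
    {V : Type u} (G : SimpleGraph V) (htree : G.IsTree) (hreg : G.CardRegular κ) :
    ∃ F : κ.ord.ToType → SimpleGraph V, G.IsFactorization F ∧
      ∀ m, Nonempty (F m ≃g T m) := by
  classical
  have hK : #(κ.ord.ToType) = κ := by rw [Cardinal.mk_toType, Cardinal.card_ord]
  -- roots of components
  have hrep : ∀ m (c : (T m).ConnectedComponent), ∃ v, (T m).connectedComponentMk v = c :=
    fun m c => c.exists_rep
  choose rtc hrtc using hrep
  let R : ∀ m, (T m).RootedForest := fun m =>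
    { rt := fun v => rtc m ((T m).connectedComponentMk v)
      acyclic := hac m
      reach := fun v => SimpleGraph.ConnectedComponent.exact (hrtc m _)
      const := fun u v h => congrArg (rtc m) (SimpleGraph.ConnectedComponent.sound h) }
  have hprod : #(ℕ × κ.ord.ToType) = κ := by
    simp only [Cardinal.mk_prod, Cardinal.mk_nat, Cardinal.lift_aleph0, Cardinal.lift_uzero,
      Cardinal.lift_id, hK]
    exact Cardinal.aleph0_mul_eq hκ
  have hcardOpt : #(Option (ℕ × κ.ord.ToType)) = κ := by
    rw [Cardinal.mk_option, hprod]
    exact Cardinal.add_one_eq hκ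
  let ε : ∀ m, (T m).ConnectedComponent ≃ Option (ℕ × κ.ord.ToType) := fun m =>
    Classical.choice (Cardinal.eq.mp ((hcomp m).trans hcardOpt.symm))
  let St : Setup.{u} :=
    { K := κ.ord.ToType, κ := κ, W := W, T := T, R := R, rtc := rtc, ε := ε,
      hκ := hκ, hK := hK,
      hrt := fun m v => rfl,
      hsec := hrtc,
      hne := fun m v => (hni m v).elim fun w hw => ⟨w, hw⟩,
      hchle := fun m v => le_trans
        (Cardinal.mk_le_mk_of_subset ((R m).children_subset_supp)) (hord m _) }
  -- the rooted structure on G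
  obtain ⟨r₀⟩ : Nonempty V := htree.isConnected.nonempty
  let RG : G.RootedForest :=
    { rt := fun _ => r₀
      acyclic := htree.IsAcyclic
      reach := fun v => htree.isConnected.preconnected r₀ v
      const := fun _ _ _ => rfl }
  have hd0 : RG.depth r₀ = 0 := SimpleGraph.dist_self
  let paG : V → Option V := fun v => if RG.depth v = 0 then none else some (RG.parent v)
  have hpaG_some : ∀ u v : V, paG u = some v ↔ (RG.depth u ≠ 0 ∧ RG.parent u = v) := by
    intro u v
    by_cases h : RG.depth u = 0 <;> simp [paG, h]
  have hpaG_none : ∀ v : V, paG v = none ↔ RG.depth v = 0 := by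
    intro v
    by_cases h : RG.depth v = 0 <;> simp [paG, h]
  have hGadj : ∀ u v : V, G.Adj u v ↔ (paG u = some v ∨ paG v = some u) := by
    intro u v
    constructor
    · intro h
      rcases RG.adj_cases h with ⟨h1, h2⟩ | ⟨h1, h2⟩
      · exact Or.inr ((hpaG_some v u).mpr ⟨by omega, h2.symm⟩)
      · exact Or.inl ((hpaG_some u v).mpr ⟨by omega, h2.symm⟩)
    · intro h
      rcases h with h1 | h1
      · obtain ⟨hne0, hp⟩ := (hpaG_some u v).mp h1
        rw [← hp]
        exact (RG.parent_adj hne0).symm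
      · obtain ⟨hne0, hp⟩ := (hpaG_some v u).mp h1
        rw [← hp]
        exact RG.parent_adj hne0
  have hcardch : ∀ v : V, #(RG.children v) = κ := by
    intro v
    by_cases h : RG.depth v = 0
    · rw [← RG.neighborSet_eq_of_root h]
      exact hreg v
    · have h2 := RG.neighborSet_eq_of_ne_root h
      have h3 : κ = #(RG.children v) + 1 := by
        rw [← hreg v, h2, Cardinal.mk_insert RG.parent_not_mem_children]
      have hinf : ℵ₀ ≤ #(RG.children v) := by
        by_contra hcon
        push_neg at hcon
        have hlt : κ < ℵ₀ := by
          rw [h3]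
          exact Cardinal.add_lt_aleph0 hcon Cardinal.one_lt_aleph0
        exact absurd hκ (not_le.mpr hlt)
      rw [h3, Cardinal.add_one_eq hinf]
  let chG : ∀ v : V, κ.ord.ToType ≃ {u : V // paG u = some v} := fun v =>
    (Classical.choice (Cardinal.eq.mp (hK.trans (hcardch v).symm)) :
      κ.ord.ToType ≃ ↥(RG.children v)).trans
      (Equiv.subtypeEquivRight (fun u =>
        (RG.mem_children_iff).trans ((hpaG_some u v).symm)))
  obtain ⟨fG, hfG0, hfGp⟩ := exists_enum paG RG.depth r₀ chG
    ((hpaG_none r₀).mpr hd0) hd0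
    (fun v hv => by
      have := (hpaG_none v).mp hv
      exact (RG.depth_eq_zero_iff.mp this))
    (fun v u hv => by
      obtain ⟨hne0, hp⟩ := (hpaG_some v u).mp hv
      rw [← hp]
      exact RG.depth_parent hne0)
  obtain ⟨fXe, hfX0, hfXp⟩ := St.Xenum
  let e : V ≃ St.XV := fG.symm.trans fXe
  -- parent relations translate to list relations
  have hGpa_iff : ∀ l l' : List κ.ord.ToType,
      paG (fG l') = some (fG l) ↔ ∃ a, l' = a :: l := by
    intro l l'
    constructor
    · intro h
      cases l' with
      | nil =>
        rw [hfG0, (hpaG_none r₀).mpr hd0] at h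
        exact nomatch h
      | cons a t =>
        rw [hfGp a t] at h
        have := fG.injective (Option.some_injective _ h)
        exact ⟨a, by rw [this]⟩
    · rintro ⟨a, rfl⟩
      exact hfGp a l
  have hXpa_iff : ∀ l l' : List κ.ord.ToType,
      St.paX (fXe l') = some (fXe l) ↔ ∃ a, l' = a :: l := by
    intro l l'
    constructor
    · intro h
      cases l' with
      | nil =>
        rw [hfX0] at h
        exact nomatch h
      | cons a t =>
        rw [hfXp a t] at h
        have := fXe.injective (Option.some_injective _ h)
        exact ⟨a, by rw [this]⟩
    · rintro ⟨a, rfl⟩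
      exact hfXp a l
  have hadj : ∀ u v : V, G.Adj u v ↔ St.XG.Adj (e u) (e v) := by
    intro u v
    rw [hGadj, St.XG_adj]
    have h1 : paG u = some v ↔ St.paX (e u) = some (e v) := by
      conv_lhs => rw [show u = fG (fG.symm u) from (fG.apply_symm_apply u).symm,
        show v = fG (fG.symm v) from (fG.apply_symm_apply v).symm]
      rw [hGpa_iff (fG.symm v) (fG.symm u)]
      rw [show St.paX (e u) = some (e v) ↔ ∃ a, fG.symm u = a :: fG.symm v from
        hXpa_iff (fG.symm v) (fG.symm u)]
    have h2 : paG v = some u ↔ St.paX (e v) = some (e u) := by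
      conv_lhs => rw [show u = fG (fG.symm u) from (fG.apply_symm_apply u).symm,
        show v = fG (fG.symm v) from (fG.apply_symm_apply v).symm]
      rw [hGpa_iff (fG.symm u) (fG.symm v)]
      rw [show St.paX (e v) = some (e u) ↔ ∃ a, fG.symm v = a :: fG.symm u from
        hXpa_iff (fG.symm u) (fG.symm v)]
    rw [h1, h2]
    tauto
  -- the factorization
  let F : κ.ord.ToType → SimpleGraph V := fun m => SimpleGraph.comap e (St.FX m)
  have hFadj : ∀ m (u v : V), (F m).Adj u v ↔ (St.FX m).Adj (e u) (e v) := fun _ _ _ => Iff.rfl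
  refine ⟨F, ⟨?_, ?_, ?_⟩, ?_⟩
  · intro m u v h
    rw [hFadj] at h
    exact (hadj u v).mpr (St.FX_le_XG m h)
  · intro m m' hmm'
    rw [Set.disjoint_left]
    intro ed hed hed'
    induction ed with
    | _ u v =>
      rw [SimpleGraph.mem_edgeSet] at hed hed'
      exact hmm' (St.FX_adj_disjoint hed hed')
  · ext ed
    induction ed with
    | _ u v =>
      simp only [Set.mem_iUnion, SimpleGraph.mem_edgeSet]
      constructor
      · rintro ⟨m, hm⟩
        exact (hadj u v).mpr (St.FX_le_XG m hm)
      · intro h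
        obtain ⟨m, hm⟩ := St.XG_adj_exists ((hadj u v).mp h)
        exact ⟨m, hm⟩
  · intro m
    exact ⟨((⟨e, fun {a b} => Iff.rfl⟩ : F m ≃g St.FX m)).trans (St.FXiso m)⟩

/-- The κ-regular tree admits a `T`-factorization for every family `T` of `κ` forests
without isolated vertices, each with `κ` components of order at most `κ`. -/
theorem stmt_4 (κ : Cardinal.{u}) (hκ : ℵ₀ ≤ κ)
    (W : κ.ord.ToType → Type u) (T : ∀ m, SimpleGraph (W m))
    (hac : ∀ m, (T m).IsAcyclic) (hni : ∀ m, (T m).NoIsolatedVerts)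
    (hcomp : ∀ m, #((T m).ConnectedComponent) = κ)
    (hord : ∀ m (c : (T m).ConnectedComponent), #c.supp ≤ κ)
    {V : Type u} (G : SimpleGraph V) (htree : G.IsTree) (hreg : G.CardRegular κ) :
    ∃ F : κ.ord.ToType → SimpleGraph V, G.IsFactorization F ∧
      ∀ m, Nonempty (F m ≃g T m) := by
  exact stmt_4' κ hκ W T hac hni hcomp hord G htree hreg
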